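/- For every (x, y) ∈ X and all reals w ≥ 0, z ≥ 0 with σ + ∑_{i=1}^n c_i x_i + ∑_{i=1}^m d_i y_i² ≤ 4wz, the strengthened rotated-cone polymatroid inequality holds: (√(σ + ∑_{i∈T} d_i y_i²) + ∑_{i=1}^n ρ_i x_i)² + ∑_{i∈{1,…,m}∖T} d_i y_i² ≤ 4wz. -/

import Mathlib

lemma sqrt_diff_anti (c a B : ℝ) (hc : 0 ≤ c) (ha : 0 ≤ a) (hab : a ≤ B) :
    Real.sqrt (c + B) - Real.sqrt B ≤ Real.sqrt (c + a) - Real.sqrt a := by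
  have hB : 0 ≤ B := ha.trans hab
  have h1 : Real.sqrt (c + B) * Real.sqrt a ≤ Real.sqrt (c + a) * Real.sqrt B := by
    rw [← Real.sqrt_mul (by linarith), ← Real.sqrt_mul (by linarith)]
    exact Real.sqrt_le_sqrt (by nlinarith)
  have e1 := Real.sq_sqrt (show (0:ℝ) ≤ c + B by linarith)
  have e2 := Real.sq_sqrt (show (0:ℝ) ≤ c + a by linarith)
  have e3 := Real.sq_sqrt ha
  have e4 := Real.sq_sqrt hB
  have n1 := Real.sqrt_nonneg (c+B)
  have n2 := Real.sqrt_nonneg (c+a)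
  have n3 := Real.sqrt_nonneg a
  have n4 := Real.sqrt_nonneg B
  nlinarith [sq_nonneg (Real.sqrt (c+B) + Real.sqrt a - Real.sqrt (c+a) - Real.sqrt B),
    sq_nonneg (Real.sqrt (c+B) + Real.sqrt a + Real.sqrt (c+a) + Real.sqrt B)]

/-- For every (x, y) ∈ X and all w ≥ 0, z ≥ 0 with
σ + ∑ cᵢ xᵢ + ∑ dᵢ yᵢ² ≤ 4wz, the strengthened rotated-cone polymatroid inequality holds:
(√(σ + ∑_{i∈T} dᵢ yᵢ²) + ∑ ρᵢ xᵢ)² + ∑_{i∉T} dᵢ yᵢ² ≤ 4wz. -/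
theorem strengthened_rotated_polymatroid
    (n m : ℕ) (σ : ℝ) (hσ : 0 ≤ σ) (c : Fin n → ℝ) (hc : ∀ i, 0 ≤ c i)
    (d : Fin m → ℝ) (hd : ∀ i, 0 ≤ d i) (T : Finset (Fin m))
    (X : Set ((Fin n → ℝ) × (Fin m → ℝ)))
    (hX : ∀ p ∈ X, (∀ i, p.1 i = 0 ∨ p.1 i = 1) ∧ (∀ i, 0 ≤ p.2 i))
    (ρ : Fin n → ℝ)
    (hρ : ∀ k : Fin n, ρ k = 0 ∨ ∃ B : ℝ, 0 ≤ B ∧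
      ρ k = Real.sqrt (c k + B) - Real.sqrt B ∧
      ∀ p ∈ X, p.1 k = 1 →
        σ + ∑ i ∈ Finset.Iio k, c i * p.1 i + ∑ i ∈ T, d i * p.2 i ^ 2 ≤ B)
    (x : Fin n → ℝ) (y : Fin m → ℝ) (hxy : (x, y) ∈ X)
    (w z : ℝ) (hw : 0 ≤ w) (hz : 0 ≤ z)
    (hcon : σ + ∑ i, c i * x i + ∑ i, d i * y i ^ 2 ≤ 4 * w * z) :
    (Real.sqrt (σ + ∑ i ∈ T, d i * y i ^ 2) + ∑ i, ρ i * x i) ^ 2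
      + ∑ i ∈ Tᶜ, d i * y i ^ 2 ≤ 4 * w * z := by
  obtain ⟨hx01', hy0'⟩ := hX (x, y) hxy
  have hx01 : ∀ i, x i = 0 ∨ x i = 1 := hx01'
  set s : ℝ := σ + ∑ i ∈ T, d i * y i ^ 2 with hs
  have hsnn : 0 ≤ s :=
    add_nonneg hσ (Finset.sum_nonneg fun i _ => mul_nonneg (hd i) (sq_nonneg _))
  have hxnn : ∀ i, 0 ≤ x i := fun i => by rcases hx01 i with h | h <;> simp [h]
  have key : ∀ j : ℕ,
      Real.sqrt s + ∑ i ∈ Finset.univ.filter (fun i : Fin n => (i : ℕ) < j), ρ i * x i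
        ≤ Real.sqrt (s + ∑ i ∈ Finset.univ.filter (fun i : Fin n => (i : ℕ) < j), c i * x i) := by
    intro j
    induction j with
    | zero => simp
    | succ j ih =>
      by_cases hj : j < n
      · have hset : Finset.univ.filter (fun i : Fin n => (i : ℕ) < j + 1)
            = insert ⟨j, hj⟩ (Finset.univ.filter (fun i : Fin n => (i : ℕ) < j)) := by
          ext i
          simp [Nat.lt_succ_iff_lt_or_eq, Fin.ext_iff, or_comm]
          exact Nat.le_iff_lt_or_eq.trans or_comm
        have hnotmem : (⟨j, hj⟩ : Fin n) ∉ Finset.univ.filter (fun i : Fin n => (i : ℕ) < j) := by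
          simp
        rw [hset, Finset.sum_insert hnotmem, Finset.sum_insert hnotmem]
        set k : Fin n := ⟨j, hj⟩
        set Sρ := ∑ i ∈ Finset.univ.filter (fun i : Fin n => (i : ℕ) < j), ρ i * x i with hSρ
        set Sc := ∑ i ∈ Finset.univ.filter (fun i : Fin n => (i : ℕ) < j), c i * x i with hSc
        have hScnn : 0 ≤ Sc :=
          Finset.sum_nonneg fun i _ => mul_nonneg (hc i) (hxnn i)
        rcases hx01 k with hxk | hxk
        · rw [hxk]; simp only [mul_zero, zero_add]
          exact ih
        · rw [hxk, mul_one, mul_one]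
          have hIio : Finset.Iio k = Finset.univ.filter (fun i : Fin n => (i : ℕ) < j) := by
            ext i
            simp only [Finset.mem_Iio, Finset.mem_filter, Finset.mem_univ, true_and]
            exact Fin.lt_def
          rcases hρ k with hρk | ⟨B, hB0, hρk, hBbd⟩
          · rw [hρk, zero_add]
            exact ih.trans (Real.sqrt_le_sqrt (by nlinarith [hc k]))
          · have hbd := hBbd (x, y) hxy (by exact hxk)
            rw [hIio] at hbd
            have hab : s + Sc ≤ B := by simp only [hs, hSc]; linarith [hbd]
            have ha : 0 ≤ s + Sc := add_nonneg hsnn hScnn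
            have hk := sqrt_diff_anti (c k) (s + Sc) B (hc k) ha hab
            rw [← hρk] at hk
            have hrw : s + (c k + Sc) = c k + (s + Sc) := by ring
            rw [hrw]
            have hsple : Real.sqrt s + Sρ ≤ Real.sqrt (s + Sc) := ih
            linarith [hk, hsple]
      · have h1 : Finset.univ.filter (fun i : Fin n => (i : ℕ) < j + 1) = Finset.univ :=
          Finset.filter_true_of_mem fun i _ => by omega
        have h2 : Finset.univ.filter (fun i : Fin n => (i : ℕ) < j) = Finset.univ :=
          Finset.filter_true_of_mem fun i _ => by omega
        rw [h1, ← h2]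
        exact ih
  have hK := key n
  have huniv : Finset.univ.filter (fun i : Fin n => (i : ℕ) < n) = Finset.univ :=
    Finset.filter_true_of_mem fun i _ => i.isLt
  rw [huniv] at hK
  have hρnn : ∀ i, 0 ≤ ρ i := by
    intro i
    rcases hρ i with h | ⟨B, hB0, h, _⟩
    · rw [h]
    · rw [h]
      have : Real.sqrt B ≤ Real.sqrt (c i + B) := Real.sqrt_le_sqrt (by linarith [hc i])
      linarith
  have hLnn : 0 ≤ Real.sqrt s + ∑ i, ρ i * x i :=
    add_nonneg (Real.sqrt_nonneg _)
      (Finset.sum_nonneg fun i _ => mul_nonneg (hρnn i) (hxnn i))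
  have hcxnn : 0 ≤ ∑ i, c i * x i :=
    Finset.sum_nonneg fun i _ => mul_nonneg (hc i) (hxnn i)
  have hsq : (Real.sqrt s + ∑ i, ρ i * x i) ^ 2 ≤ s + ∑ i, c i * x i := by
    calc (Real.sqrt s + ∑ i, ρ i * x i) ^ 2
        ≤ Real.sqrt (s + ∑ i, c i * x i) ^ 2 := by
          exact pow_le_pow_left₀ hLnn hK 2
      _ = s + ∑ i, c i * x i := Real.sq_sqrt (by linarith)
  have hsplit : ∑ i ∈ T, d i * y i ^ 2 + ∑ i ∈ Tᶜ, d i * y i ^ 2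
      = ∑ i, d i * y i ^ 2 := Finset.sum_add_sum_compl T _
  simp only [hs] at hsq
  linarith [hsq, hsplit, hcon]
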